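/- Under the hypotheses of the previous iterate-growth bound (‖θ_{t+1} - θ_t‖ ≤ αL(‖θ_t‖ + β) for all t and ατL ≤ 1/4), the drift over a window of length τ satisfies ‖θ_t - θ_{t-τ}‖ ≤ 4αLτ·‖θ_t‖ + 4αLβτ for all t ≥ τ. -/
import Mathlib


theorem drift_window_bound {m : ℕ}
    (L σ α β : ℝ) (τ : ℕ)
    (hL : 1 ≤ L) (hσ : 0 ≤ σ) (hα : 0 < α) (hβ : 0 ≤ β) (hτ : 1 ≤ τ)
    (θ : ℕ → EuclideanSpace ℝ (Fin m))
    (hstep : ∀ t, ‖θ (t + 1) - θ t‖ ≤ α * L * (‖θ t‖ + β))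
    (hsmall : α * τ * L ≤ 1/4) :
    ∀ t, τ ≤ t → ‖θ t - θ (t - τ)‖ ≤ 4 * α * L * τ * ‖θ t‖ + 4 * α * L * β * τ := by
  have hL0 : (0:ℝ) < L := lt_of_lt_of_le one_pos hL
  have hαL : 0 < α * L := mul_pos hα hL0
  have key : ∀ k : ℕ, k ≤ τ → ∀ s, ‖θ (s + k) - θ s‖ ≤ 2*α*L*k*(‖θ s‖+β) := by
    intro k
    induction k with
    | zero => intro _ s; simp
    | succ k ih =>
      intro hk s
      have hk' : k ≤ τ := Nat.le_of_succ_le hk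
      have h1 := ih hk' s
      have h2 := hstep (s+k)
      have hns : ‖θ (s+k)‖ ≤ ‖θ s‖ + 2*α*L*k*(‖θ s‖+β) := by
        have h3 := norm_sub_norm_le (θ (s+k)) (θ s)
        linarith
      have tri : ‖θ (s+(k+1)) - θ s‖ ≤ ‖θ (s+k+1) - θ (s+k)‖ + ‖θ (s+k) - θ s‖ := by
        have := norm_sub_le_norm_sub_add_norm_sub (θ (s+(k+1))) (θ (s+k)) (θ s)
        simpa [Nat.add_assoc] using this
      have hX : (0:ℝ) ≤ ‖θ s‖ + β := add_nonneg (norm_nonneg _) hβ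
      have hαLk : α * L * k ≤ 1/4 := by
        have hkr : (k:ℝ) ≤ τ := Nat.cast_le.mpr hk'
        nlinarith
      have hk0 : (0:ℝ) ≤ (k:ℝ) := Nat.cast_nonneg k
      calc ‖θ (s+(k+1)) - θ s‖ ≤ ‖θ (s+k+1) - θ (s+k)‖ + ‖θ (s+k) - θ s‖ := tri
        _ ≤ α * L * (‖θ (s+k)‖ + β) + 2*α*L*k*(‖θ s‖+β) := by linarith
        _ ≤ α * L * (‖θ s‖ + 2*α*L*k*(‖θ s‖+β) + β) + 2*α*L*k*(‖θ s‖+β) := by nlinarith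
        _ ≤ 2*α*L*(k+1:ℕ)*(‖θ s‖+β) := by
            push_cast
            nlinarith [mul_nonneg (mul_nonneg hαL.le hX) (show (0:ℝ) ≤ 1 - 2*(α*L*(k:ℝ)) by linarith)]
  intro t ht
  set s := t - τ with hs
  have hst : s + τ = t := Nat.sub_add_cancel ht
  have h1 : ‖θ t - θ s‖ ≤ 2*α*L*τ*(‖θ s‖+β) := by
    have := key τ le_rfl s
    rwa [hst] at this
  have h2 : ‖θ s‖ ≤ ‖θ t‖ + ‖θ t - θ s‖ := by
    have h3 := norm_sub_norm_le (θ s) (θ t)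
    have h4 : ‖θ s - θ t‖ = ‖θ t - θ s‖ := norm_sub_rev _ _
    linarith
  have hτr : (1:ℝ) ≤ (τ:ℝ) := by exact_mod_cast hτ
  have h2τ : 2*α*L*τ ≤ 1/2 := by nlinarith
  have hD : (0:ℝ) ≤ ‖θ t - θ s‖ := norm_nonneg _
  have hp : (0:ℝ) ≤ 2*α*L*↑τ := by positivity
  nlinarith [mul_nonneg (show (0:ℝ) ≤ 1/2 - 2*α*L*↑τ by linarith) hD,
    mul_le_mul_of_nonneg_left h2 hp]
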